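/- Let v : (0,∞) → ℝ be C¹ with |(v'(r)² r²)'| ≤ M/r on (0,1) and ∫_ρ^R v'(r)² r dr ≤ C for all 0 < ρ < R ≤ 1. Then r v'(r) → 0 as r → 0⁺. -/

import Mathlib

open Set Filter

theorem stmt7 (v : ℝ → ℝ) (hC1 : ContDiffOn ℝ 1 v (Ioi 0))
    (hdiff : ∀ r ∈ Ioo (0:ℝ) 1,
      DifferentiableAt ℝ (fun s : ℝ => (deriv v s) ^ 2 * s ^ 2) r)
    (M C : ℝ) (hM : 0 < M) (hC : 0 < C)
    (hder : ∀ r ∈ Ioo (0:ℝ) 1,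
      |deriv (fun s : ℝ => (deriv v s) ^ 2 * s ^ 2) r| ≤ M / r)
    (hint : ∀ ρ R : ℝ, 0 < ρ → ρ < R → R ≤ 1 →
      (∫ r in ρ..R, (deriv v r) ^ 2 * r) ≤ C) :
    Tendsto (fun r : ℝ => r * deriv v r) (nhdsWithin 0 (Ioi 0)) (nhds 0) := by
  set g : ℝ → ℝ := fun s => (deriv v s) ^ 2 * s ^ 2 with hgdef
  have hdc : ContinuousOn (deriv v) (Ioi 0) :=
    hC1.continuousOn_deriv_of_isOpen isOpen_Ioi le_rfl
  -- interval integrability of the weighted Dirichlet integrand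
  have hsubI : ∀ a b : ℝ, 0 < a → 0 < b → uIcc a b ⊆ Ioi 0 := by
    intro a b ha hb x hx
    have : (0:ℝ) < min a b := lt_min ha hb
    exact lt_of_lt_of_le this hx.1
  have hic : ∀ a b : ℝ, 0 < a → 0 < b →
      IntervalIntegrable (fun s => (deriv v s)^2 * s) MeasureTheory.volume a b := by
    intro a b ha hb
    exact (((hdc.mono (hsubI a b ha hb)).pow 2).mul continuousOn_id).intervalIntegrable
  -- monotonicity of g t + M log t on Ioo 0 1
  have hmono : MonotoneOn (fun t => g t + M * Real.log t) (Ioo 0 1) := by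
    have hd' : ∀ t ∈ Ioo (0:ℝ) 1,
        DifferentiableAt ℝ (fun t => g t + M * Real.log t) t := fun t ht =>
      (hdiff t ht).add ((Real.differentiableAt_log ht.1.ne').const_mul M)
    apply monotoneOn_of_deriv_nonneg (convex_Ioo 0 1)
    · exact fun t ht => (hd' t ht).continuousAt.continuousWithinAt
    · rw [interior_Ioo]; exact fun t ht => (hd' t ht).differentiableWithinAt
    · intro t ht
      rw [interior_Ioo] at ht
      rw [deriv_fun_add (hdiff t ht) ((Real.differentiableAt_log ht.1.ne').const_mul M),
        deriv_const_mul _ (Real.differentiableAt_log ht.1.ne'), Real.deriv_log]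
      have h1 := (abs_le.mp (hder t ht)).1
      have h2 : M / t = M * t⁻¹ := div_eq_mul_inv M t
      rw [h2] at h1
      linarith
  have hkey : ∀ r s : ℝ, 0 < r → r ≤ s → s < 1 →
      g r ≤ g s + M * (Real.log s - Real.log r) := by
    intro r s hr hrs hs
    have := hmono ⟨hr, lt_of_le_of_lt hrs hs⟩ ⟨lt_of_lt_of_le hr hrs, hs⟩ hrs
    simp only at this
    linarith
  rw [Metric.tendsto_nhdsWithin_nhds]
  intro ε hε
  -- set up constants
  set L : ℝ := ε^2 / (2*M) with hLdef
  have hL : 0 < L := by positivity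
  set K : ℝ := Real.exp L with hKdef
  have hK1 : 1 < K := Real.one_lt_exp_iff.mpr hL
  have hK0 : 0 < K := lt_trans one_pos hK1
  have hlogK : Real.log K = L := Real.log_exp L
  set ε'' : ℝ := ε^2 * L / 4 with hε''def
  have hε'' : 0 < ε'' := by positivity
  -- tail smallness via sup argument
  set F : ℝ → ℝ := fun ρ => ∫ s in ρ..1, (deriv v s)^2 * s with hFdef
  set T : Set ℝ := F '' Ioo 0 1 with hTdef
  have hTne : T.Nonempty := ⟨F (1/2), ⟨1/2, by norm_num, rfl⟩⟩
  have hTbdd : BddAbove T := by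
    refine ⟨C, ?_⟩
    rintro x ⟨ρ, hρ, rfl⟩
    exact hint ρ 1 hρ.1 hρ.2 le_rfl
  obtain ⟨x, ⟨ρ₀, hρ₀, rfl⟩, hx⟩ := exists_lt_of_lt_csSup hTne
    (show sSup T - ε'' < sSup T by linarith)
  refine ⟨ρ₀ / K, div_pos hρ₀.1 hK0, ?_⟩
  intro r hr hrd
  rw [Real.dist_eq, sub_zero] at hrd
  rw [mem_Ioi] at hr
  rw [abs_of_pos hr] at hrd
  rw [Real.dist_eq, sub_zero]
  -- notation
  set r' : ℝ := K * r with hr'def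
  have hrr' : r < r' := by nlinarith
  have hr'ρ₀ : r' < ρ₀ := by
    calc r' < K * (ρ₀ / K) := mul_lt_mul_of_pos_left hrd hK0
      _ = ρ₀ := by field_simp
  have hr'1 : r' < 1 := lt_trans hr'ρ₀ hρ₀.2
  have hr1 : r < 1 := lt_trans hrr' hr'1
  have hr'0 : 0 < r' := lt_trans hr hrr'
  -- the tail integral is small
  have htail : (∫ s in r..r', (deriv v s)^2 * s) ≤ ε'' := by
    have hsplit : (∫ s in r..r', (deriv v s)^2 * s) + F r' = F r :=
      intervalIntegral.integral_add_adjacent_intervals (hic r r' hr hr'0)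
        (hic r' 1 hr'0 one_pos)
    have hsplit2 : (∫ s in r'..ρ₀, (deriv v s)^2 * s) + F ρ₀ = F r' :=
      intervalIntegral.integral_add_adjacent_intervals (hic r' ρ₀ hr'0 hρ₀.1)
        (hic ρ₀ 1 hρ₀.1 one_pos)
    have hnn : 0 ≤ ∫ s in r'..ρ₀, (deriv v s)^2 * s := by
      apply intervalIntegral.integral_nonneg hr'ρ₀.le
      intro u hu
      have : 0 < u := lt_of_lt_of_le hr'0 hu.1
      positivity
    have hFr : F r ≤ sSup T := le_csSup hTbdd ⟨r, ⟨hr, hr1⟩, rfl⟩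
    linarith
  -- main estimate : g r * L ≤ tail + M * L * L
  have hmain : g r * L ≤ (∫ s in r..r', (deriv v s)^2 * s) + M * L * L := by
    have h0uI : (0:ℝ) ∉ uIcc r r' := by
      rw [uIcc_of_le hrr'.le]
      rintro ⟨h1, -⟩
      exact absurd h1 (not_le.mpr hr)
    have hinteq : ∀ c : ℝ, (∫ s in r..r', c * s⁻¹) = c * L := by
      intro c
      rw [intervalIntegral.integral_const_mul, integral_inv h0uI, hr'def,
        mul_div_assoc, div_self hr.ne', mul_one, hlogK]
    have hiinv : IntervalIntegrable (fun s : ℝ => s⁻¹) MeasureTheory.volume r r' := by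
      apply ContinuousOn.intervalIntegrable
      exact continuousOn_inv₀.mono (fun x hx => (lt_of_lt_of_le (lt_min hr hr'0) hx.1).ne')
    have hpt : ∀ x ∈ Icc r r', g r * x⁻¹ ≤ (deriv v x)^2 * x + (M * L) * x⁻¹ := by
      intro x hx
      have hx0 : 0 < x := lt_of_lt_of_le hr hx.1
      have hx1 : x < 1 := lt_of_le_of_lt hx.2 hr'1
      have hlog : Real.log x - Real.log r ≤ L := by
        have h1 : Real.log x ≤ Real.log r' := Real.log_le_log hx0 hx.2
        have h2 : Real.log r' = L + Real.log r := by
          rw [hr'def, Real.log_mul hK0.ne' hr.ne', hlogK]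
        linarith
      have hgx : g r ≤ g x + M * L := by
        have h3 := hkey r x hr hx.1 hx1
        nlinarith
      have hgs : g x * x⁻¹ = (deriv v x)^2 * x := by
        rw [hgdef]
        field_simp
      have h4 : g r * x⁻¹ ≤ (g x + M * L) * x⁻¹ :=
        mul_le_mul_of_nonneg_right hgx (inv_nonneg.mpr hx0.le)
      calc g r * x⁻¹ ≤ (g x + M * L) * x⁻¹ := h4
        _ = g x * x⁻¹ + (M * L) * x⁻¹ := by ring
        _ = (deriv v x)^2 * x + (M * L) * x⁻¹ := by rw [hgs]
    have hileft : IntervalIntegrable (fun s : ℝ => g r * s⁻¹) MeasureTheory.volume r r' :=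
      hiinv.const_mul (g r)
    have hiright : IntervalIntegrable (fun s : ℝ => (deriv v s)^2 * s + (M * L) * s⁻¹)
        MeasureTheory.volume r r' :=
      (hic r r' hr hr'0).add (hiinv.const_mul (M * L))
    have hmono2 := intervalIntegral.integral_mono_on hrr'.le hileft hiright hpt
    rw [hinteq (g r)] at hmono2
    rw [intervalIntegral.integral_add (hic r r' hr hr'0) (hiinv.const_mul (M*L)),
      hinteq (M*L)] at hmono2
    linarith
  -- conclude
  have hML : M * L = ε^2 / 2 := by
    rw [hLdef]; field_simp
  have hgr : g r ≤ 3 * ε^2 / 4 := by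
    have : g r * L ≤ ε'' + M * L * L := by linarith
    rw [hε''def, hML] at this
    nlinarith
  have hgeq : g r = (r * deriv v r)^2 := by rw [hgdef]; ring
  rw [hgeq] at hgr
  nlinarith [abs_nonneg (r * deriv v r), sq_abs (r * deriv v r)]
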